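/- Under the stationary product measure Q on {0,1}^ℤ with Q(ω_t = 1) = 1/2, for every k and every integer j ≥ 1, Q(diam(B^k(0)) ≥ j·β_k) ≤ 6 j e^{−j}, where β_k = 2^{ℓ_k}. -/

import Mathlib

open MeasureTheory

/-- `b` is the right endpoint of an occurrence of the word `I_ℓ` (of `ℓ-1` ones
followed by a zero) in the environment `e : ℤ → Bool`. -/
def occEnd (ℓ : ℕ) (e : ℤ → Bool) (b : ℤ) : Prop :=
  ∀ i < ℓ, e (b - ℓ + 1 + i) = decide (i < ℓ - 1)

namespace Stmt4Aux

def extF {n : ℕ} (w : Fin n → Bool) (x : ℕ) : Bool :=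
  if h : x < n then w ⟨x, h⟩ else false

def NoOcc (ℓ n : ℕ) (w : Fin n → Bool) : Prop :=
  ∀ o, o + ℓ ≤ n → ¬ (∀ i < ℓ, extF w (o + i) = decide (i < ℓ - 1))

open Classical in
noncomputable def AvSet (ℓ n : ℕ) : Finset (Fin n → Bool) :=
  Finset.univ.filter (NoOcc ℓ n)

noncomputable def aN (ℓ n : ℕ) : ℕ := (AvSet ℓ n).card

lemma mem_AvSet {ℓ n : ℕ} {w : Fin n → Bool} : w ∈ AvSet ℓ n ↔ NoOcc ℓ n w := by
  classical
  simp [AvSet]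

lemma aN_le_pow (ℓ n : ℕ) : aN ℓ n ≤ 2 ^ n := by
  classical
  have h := Finset.card_filter_le (Finset.univ : Finset (Fin n → Bool)) (NoOcc ℓ n)
  calc aN ℓ n ≤ (Finset.univ : Finset (Fin n → Bool)).card := by
        simpa [aN, AvSet] using h
    _ = 2 ^ n := by simp [Finset.card_univ]

def embed (n i : ℕ) (t : Fin (n - 1 - i) → Bool) : Fin n → Bool :=
  fun x => if h : i < x.1 then t ⟨x.1 - i - 1, by have := x.2; omega⟩ else decide (x.1 ≠ i)

lemma avset_subset (ℓ n : ℕ) (hℓ : 1 ≤ ℓ) :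
    AvSet ℓ n ⊆ insert (fun _ => true)
      ((Finset.range (min (ℓ - 1) n)).biUnion
        fun i => (AvSet ℓ (n - 1 - i)).image (embed n i)) := by
  classical
  intro w hw
  rw [mem_AvSet] at hw
  by_cases hall : ∀ x : Fin n, w x = true
  · exact Finset.mem_insert.2 (Or.inl (funext fun x => (hall x)))
  · push_neg at hall
    obtain ⟨x₀, hx₀⟩ := hall
    have hex : ∃ m, ∃ h : m < n, w ⟨m, h⟩ = false := by
      refine ⟨x₀.1, x₀.2, ?_⟩
      have : w ⟨x₀.1, x₀.2⟩ = w x₀ := by congr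
      rw [this]
      simpa using hx₀
    set i := Nat.find hex with hidef
    obtain ⟨hin, hif⟩ : ∃ h : i < n, w ⟨i, h⟩ = false := Nat.find_spec hex
    have hmin : ∀ y, y < i → ∀ h : y < n, w ⟨y, h⟩ = true := by
      intro y hy h
      have h2 := Nat.find_min hex hy
      push_neg at h2
      simpa using h2 h
    have hik : i < ℓ - 1 := by
      by_contra hge
      push_neg at hge
      apply hw (i - (ℓ - 1)) (by omega)
      intro s hs
      have hsn : i - (ℓ - 1) + s < n := by omega
      rw [extF, dif_pos hsn]
      by_cases hsk : s < ℓ - 1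
      · rw [hmin _ (by omega) hsn]
        simp [hsk]
      · have heq : (⟨i - (ℓ - 1) + s, hsn⟩ : Fin n) = ⟨i, hin⟩ := Fin.ext (by simp; omega)
        rw [heq, hif]
        simp [hsk]
    refine Finset.mem_insert.2 (Or.inr ?_)
    refine Finset.mem_biUnion.2 ⟨i, Finset.mem_range.2 (by omega), ?_⟩
    refine Finset.mem_image.2 ⟨fun y => w ⟨i + 1 + y.1, by have := y.2; omega⟩, ?_, ?_⟩
    · rw [mem_AvSet]
      intro o ho hocc
      apply hw (i + 1 + o) (by omega)
      intro s hs
      have h1 : i + 1 + o + s < n := by omega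
      have h2 : o + s < n - 1 - i := by omega
      have h3 := hocc s hs
      rw [extF, dif_pos h2] at h3
      rw [extF, dif_pos h1]
      rw [← h3]
      congr 1
      exact Fin.ext (by simp; omega)
    · funext x
      rw [embed]
      split_ifs with h
      · have : (⟨i + 1 + (x.1 - i - 1), by have := x.2; omega⟩ : Fin n) = x :=
          Fin.ext (by simp; omega)
        rw [this]
      · rcases Nat.lt_or_ge x.1 i with h' | h'
        · have hx : w x = true := by
            have := hmin x.1 h' x.2
            simpa using this
          rw [hx]
          simp
          omega
        · have hxi : x.1 = i := by omega
          have hx : w x = false := by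
            have : x = (⟨i, hin⟩ : Fin n) := Fin.ext (by simp [hxi])
            rw [this, hif]
          rw [hx]
          simp [hxi]

lemma aN_rec (ℓ n : ℕ) (hℓ : 1 ≤ ℓ) :
    aN ℓ n ≤ 1 + ∑ i ∈ Finset.range (min (ℓ - 1) n), aN ℓ (n - 1 - i) := by
  classical
  have h1 := Finset.card_le_card (avset_subset ℓ n hℓ)
  have h2 := Finset.card_insert_le (fun _ : Fin n => true)
    ((Finset.range (min (ℓ - 1) n)).biUnion
        fun i => (AvSet ℓ (n - 1 - i)).image (embed n i))
  have h3 := Finset.card_biUnion_le (s := Finset.range (min (ℓ - 1) n))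
    (t := fun i => (AvSet ℓ (n - 1 - i)).image (embed n i))
  have h4 : ∑ i ∈ Finset.range (min (ℓ - 1) n), ((AvSet ℓ (n - 1 - i)).image (embed n i)).card
      ≤ ∑ i ∈ Finset.range (min (ℓ - 1) n), (AvSet ℓ (n - 1 - i)).card :=
    Finset.sum_le_sum fun i _ => Finset.card_image_le
  simp only [aN]
  omega


lemma aN_one (n : ℕ) : aN 1 n ≤ 1 := by
  have h := aN_rec 1 n le_rfl
  simpa using h

lemma aN_two (n : ℕ) : aN 2 n ≤ n + 1 := by
  induction n using Nat.strong_induction_on with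
  | _ n ih =>
    match n with
    | 0 => simpa using aN_le_pow 2 0
    | Nat.succ m =>
      have h := aN_rec 2 (m + 1) (by norm_num)
      have hmin : min (2 - 1) (m + 1) = 1 := by omega
      rw [hmin] at h
      simp only [Finset.sum_range_one, Nat.add_sub_cancel, Nat.sub_zero] at h
      have h2 := ih m (by omega)
      show aN 2 (m + 1) ≤ m + 1 + 1
      omega

lemma two_exp (n : ℕ) (hn : 3 ≤ n) : 8 * n ≤ 3 * 2 ^ n := by
  induction n, hn using Nat.le_induction with
  | base => norm_num
  | succ n hn ih =>
    have : 8 ≤ 2 ^ n := by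
      calc (8:ℕ) = 2 ^ 3 := by norm_num
      _ ≤ 2 ^ n := Nat.pow_le_pow_right (by norm_num) hn
    calc 8 * (n + 1) = 8 * n + 8 := by ring
    _ ≤ 3 * 2 ^ n + 3 * 2 ^ n := by omega
    _ = 3 * 2 ^ (n + 1) := by ring

lemma aN_big (ℓ : ℕ) (hℓ : 3 ≤ ℓ) (n : ℕ) :
    (aN ℓ n : ℝ) ≤ 2 * (2 * (1 - (1/2:ℝ)^ℓ))^n / (1 - (1/2:ℝ)^ℓ)^(ℓ-1)
      - 1/((ℓ:ℝ) - 2) := by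
  obtain ⟨q, hqdef⟩ : ∃ x : ℝ, x = 1 - (1/2:ℝ)^ℓ := ⟨_, rfl⟩
  rw [← hqdef]
  have hps : (1/2:ℝ)^ℓ ≤ 1/8 := by
    calc (1/2:ℝ)^ℓ ≤ (1/2:ℝ)^3 := pow_le_pow_of_le_one (by norm_num) (by norm_num) hℓ
    _ = 1/8 := by norm_num
  have hppos : (0:ℝ) < (1/2:ℝ)^ℓ := by positivity
  have hq78 : (7:ℝ)/8 ≤ q := by rw [hqdef]; linarith
  have hq0 : (0:ℝ) < q := by linarith
  have hq1 : q ≤ 1 := by rw [hqdef]; linarith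
  have hl3 : (3:ℝ) ≤ (ℓ:ℝ) := by exact_mod_cast hℓ
  have hl2 : (0:ℝ) < (ℓ:ℝ) - 2 := by linarith
  have ht1 : 1/((ℓ:ℝ) - 2) ≤ 1 := by
    rw [div_le_one hl2]; linarith
  have ht0 : 0 < 1/((ℓ:ℝ) - 2) := by positivity
  induction n using Nat.strong_induction_on with
  | _ n ih =>
    by_cases hnk : n ≤ ℓ - 1
    · -- base case
      have h1 : (aN ℓ n : ℝ) ≤ 2^n := by
        have := aN_le_pow ℓ n
        calc (aN ℓ n : ℝ) ≤ ((2^n : ℕ) : ℝ) := by exact_mod_cast this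
        _ = 2^n := by push_cast; ring
      have hqk : q^(ℓ-1) ≤ q^n := pow_le_pow_of_le_one hq0.le hq1 hnk
      have hqk1 : q^(ℓ-1) ≤ 1 := pow_le_one₀ hq0.le hq1
      have h2 : (2:ℝ)^n + 1 ≤ 2 * (2*q)^n / q^(ℓ-1) := by
        rw [le_div_iff₀ (pow_pos hq0 _), mul_pow]
        have e1 : (2:ℝ)^n * q^(ℓ-1) ≤ 2^n * q^n :=
          mul_le_mul_of_nonneg_left hqk (by positivity)
        have e2 : (1:ℝ) ≤ 2^n * q^n := by
          rw [← mul_pow]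
          apply one_le_pow₀
          linarith
        have e3 : (1:ℝ) * q^(ℓ-1) ≤ 1 := by
          rw [one_mul]; exact hqk1
        nlinarith
      linarith
    · -- inductive step
      push_neg at hnk
      have hk2 : 2 ≤ ℓ - 1 := by omega
      have hrec := aN_rec ℓ n (by omega)
      have hmin : min (ℓ - 1) n = ℓ - 1 := by omega
      rw [hmin] at hrec
      have hrecR : (aN ℓ n : ℝ) ≤ 1 + ∑ i ∈ Finset.range (ℓ-1), (aN ℓ (n-1-i) : ℝ) := by
        exact_mod_cast hrec
      have hqkq : (2*q)^(ℓ-1) * (2 - 2*q) = q^(ℓ-1) := by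
        have e1 : 2 - 2*q = 2 * (1/2:ℝ)^ℓ := by rw [hqdef]; ring
        have e2 : (2:ℝ)^(ℓ-1) * (2 * (1/2:ℝ)^ℓ) = 1 := by
          have e3 : (2:ℝ)^(ℓ-1) * 2 = 2^ℓ := by
            rw [← pow_succ]
            congr 1
            omega
          rw [← mul_assoc, e3, ← mul_pow]
          norm_num
        rw [e1, mul_pow]
        calc (2:ℝ)^(ℓ-1) * q^(ℓ-1) * (2 * (1/2:ℝ)^ℓ)
            = q^(ℓ-1) * ((2:ℝ)^(ℓ-1) * (2 * (1/2:ℝ)^ℓ)) := by ring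
        _ = q^(ℓ-1) := by rw [e2, mul_one]
      have hS : ∑ i ∈ Finset.range (ℓ-1), (2*q)^i ≤ (2*q)^(ℓ-1) := by
        have hgm := geom_sum_mul (2*q) (ℓ-1)
        have hqk1 : q^(ℓ-1) ≤ 1 := pow_le_one₀ hq0.le hq1
        nlinarith [hgm, hqkq, hqk1]
      have hsum : ∑ i ∈ Finset.range (ℓ-1), (2*q)^(n-1-i) ≤ (2*q)^n := by
        have hrw : ∀ i ∈ Finset.range (ℓ-1),
            (2*q)^(n-1-i) = (2*q)^(n-(ℓ-1)) * (2*q)^((ℓ-1)-1-i) := by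
          intro i hi
          rw [Finset.mem_range] at hi
          rw [← pow_add]
          congr 1
          omega
        rw [Finset.sum_congr rfl hrw, ← Finset.mul_sum]
        rw [Finset.sum_range_reflect (fun i => (2*q)^i) (ℓ-1)]
        calc (2*q)^(n-(ℓ-1)) * ∑ i ∈ Finset.range (ℓ-1), (2*q)^i
            ≤ (2*q)^(n-(ℓ-1)) * (2*q)^(ℓ-1) :=
              mul_le_mul_of_nonneg_left hS (by positivity)
        _ = (2*q)^n := by rw [← pow_add]; congr 1; omega
      have hterm : ∀ i ∈ Finset.range (ℓ-1),
          (aN ℓ (n-1-i) : ℝ) ≤ 2 * (2*q)^(n-1-i) / q^(ℓ-1) - 1/((ℓ:ℝ)-2) := by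
        intro i _
        exact ih (n-1-i) (by omega)
      have hsum2 : ∑ i ∈ Finset.range (ℓ-1), (aN ℓ (n-1-i) : ℝ)
          ≤ ∑ i ∈ Finset.range (ℓ-1), (2 * (2*q)^(n-1-i) / q^(ℓ-1) - 1/((ℓ:ℝ)-2)) :=
        Finset.sum_le_sum hterm
      have hsplit : ∑ i ∈ Finset.range (ℓ-1), (2 * (2*q)^(n-1-i) / q^(ℓ-1) - 1/((ℓ:ℝ)-2))
          = (2 / q^(ℓ-1)) * (∑ i ∈ Finset.range (ℓ-1), (2*q)^(n-1-i))
            - ((ℓ-1 : ℕ) : ℝ) * (1/((ℓ:ℝ)-2)) := by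
        rw [Finset.sum_sub_distrib, Finset.sum_const, Finset.card_range, Finset.mul_sum]
        congr 1
        · apply Finset.sum_congr rfl
          intro i _
          ring
        · rw [nsmul_eq_mul]
      have hmul : (2 / q^(ℓ-1)) * (∑ i ∈ Finset.range (ℓ-1), (2*q)^(n-1-i))
          ≤ (2 / q^(ℓ-1)) * (2*q)^n :=
        mul_le_mul_of_nonneg_left hsum (by positivity)
      have hcount : ((ℓ-1 : ℕ) : ℝ) = (ℓ:ℝ) - 1 := by
        have h0 : (1:ℕ) ≤ ℓ := by omega
        push_cast [h0]
        ring
      have hkt : ((ℓ:ℝ) - 1) * (1/((ℓ:ℝ)-2)) = 1/((ℓ:ℝ)-2) + 1 := by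
        field_simp
        ring
      have hfin : 2 / q^(ℓ-1) * (2*q)^n = 2 * (2*q)^n / q^(ℓ-1) := by ring
      rw [hsplit, hcount, hkt] at hsum2
      linarith [hrecR, hsum2, hmul]

def prep (ℓ m : ℕ) (t : Fin m → Bool) : Fin (ℓ + m) → Bool :=
  fun x => if h : x.1 < ℓ then decide (x.1 < ℓ - 1) else t ⟨x.1 - ℓ, by have := x.2; omega⟩

open MeasureTheory in
lemma cylinder_bound {Ω : Type} [MeasurableSpace Ω] (μ : Measure Ω)
    (env : ℤ → Ω → Bool)
    (hiid : ∀ (s : Finset ℤ) (b : ℤ → Bool),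
      μ {ω | ∀ i ∈ s, env i ω = b i} = (1 / 2 : ENNReal) ^ s.card)
    (a : ℤ) (n : ℕ) (S : Finset (Fin n → Bool)) (F : Set Ω)
    (hF : ∀ ω ∈ F, ∃ w ∈ S, ∀ d : Fin n, env (a + d) ω = w d) :
    μ F ≤ S.card * (1 / 2 : ENNReal) ^ n := by
  classical
  set s : Finset ℤ := (Finset.range n).image (fun d : ℕ => a + d) with hs
  have hcard : s.card = n := by
    rw [hs, Finset.card_image_of_injective _ (fun x y hxy => by omega), Finset.card_range]
  have key : ∀ w : Fin n → Bool,
      μ {ω | ∀ i ∈ s, env i ω = extF w (i - a).toNat} = (1/2:ENNReal)^n := by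
    intro w
    rw [hiid s (fun i => extF w (i - a).toNat), hcard]
  have hsub : F ⊆ ⋃ w ∈ S, {ω | ∀ i ∈ s, env i ω = extF w (i - a).toNat} := by
    intro ω hω
    obtain ⟨w, hwS, hw⟩ := hF ω hω
    refine Set.mem_biUnion hwS ?_
    intro i hi
    rw [hs, Finset.mem_image] at hi
    obtain ⟨d, hd, rfl⟩ := hi
    rw [Finset.mem_range] at hd
    have h1 : ((a + (d:ℤ)) - a).toNat = d := by omega
    rw [h1, extF, dif_pos hd]
    exact hw ⟨d, hd⟩
  calc μ F ≤ μ (⋃ w ∈ S, {ω | ∀ i ∈ s, env i ω = extF w (i - a).toNat}) :=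
        measure_mono hsub
    _ ≤ ∑ w ∈ S, μ {ω | ∀ i ∈ s, env i ω = extF w (i - a).toNat} :=
        measure_biUnion_finset_le S _
    _ = ∑ _w ∈ S, (1/2:ENNReal)^n := Finset.sum_congr rfl (fun w _ => key w)
    _ = S.card * (1/2:ENNReal)^n := by rw [Finset.sum_const, nsmul_eq_mul]

lemma nat_succ_le (n : ℕ) : ((n:ℝ) + 1) ≤ 2 * (3/2:ℝ)^n := by
  induction n with
  | zero => norm_num
  | succ m ih =>
    have h1 : (1:ℝ) ≤ (3/2:ℝ)^m := one_le_pow₀ (by norm_num)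
    have h2 : 2 * (3/2:ℝ)^(m+1) = 2*(3/2)^m + (3/2)^m := by ring
    push_cast
    rw [h2]
    linarith

set_option maxHeartbeats 1000000 in
lemma final_real (ℓ j : ℕ) (hℓ : 1 ≤ ℓ) (hj : 1 ≤ j) :
    (aN ℓ (j*2^ℓ + ℓ - 2) : ℝ) * (1/2:ℝ)^(j*2^ℓ + ℓ - 2)
      + ((j*2^ℓ : ℕ) : ℝ) * ((aN ℓ (j*2^ℓ - 1) : ℝ) * (1/2:ℝ)^(ℓ + (j*2^ℓ - 1)))
      ≤ 6 * j * Real.exp (-(j:ℝ)) := by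
  set M : ℕ := j * 2^ℓ with hMdef
  have h2l : (2:ℕ) ≤ 2^ℓ := by
    calc (2:ℕ) = 2^1 := by norm_num
    _ ≤ 2^ℓ := Nat.pow_le_pow_right (by norm_num) hℓ
  have hM2 : 2 ≤ M := by
    calc 2 ≤ 2^ℓ := h2l
    _ = 1 * 2^ℓ := by ring
    _ ≤ j * 2^ℓ := Nat.mul_le_mul_right _ hj
  have hp2 : ((2:ℝ))^ℓ * (1/2:ℝ)^ℓ = 1 := by
    rw [← mul_pow]; norm_num
  have hMp : (M:ℝ) * (1/2:ℝ)^ℓ = j := by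
    rw [hMdef]
    push_cast
    rw [mul_assoc, hp2, mul_one]
  have hppos : (0:ℝ) < (1/2:ℝ)^ℓ := by positivity
  have hphalf : (1/2:ℝ)^ℓ ≤ 1/2 := by
    calc (1/2:ℝ)^ℓ ≤ (1/2:ℝ)^1 := pow_le_pow_of_le_one (by norm_num) (by norm_num) hℓ
    _ = 1/2 := by norm_num
  obtain ⟨q, hqdef⟩ : ∃ x : ℝ, x = 1 - (1/2:ℝ)^ℓ := ⟨_, rfl⟩
  have hq0 : 0 < q := by rw [hqdef]; linarith
  have hq1 : q ≤ 1 := by rw [hqdef]; linarith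
  have hqhalf : 1/2 ≤ q := by rw [hqdef]; linarith
  -- q^M ≤ exp(-j)
  have hqexp : q ≤ Real.exp (-(1/2:ℝ)^ℓ) := by
    have := Real.add_one_le_exp (-(1/2:ℝ)^ℓ)
    rw [hqdef]; linarith
  have hqM : q^M ≤ Real.exp (-(j:ℝ)) := by
    calc q^M ≤ (Real.exp (-(1/2:ℝ)^ℓ))^M :=
          pow_le_pow_left₀ hq0.le hqexp M
    _ = Real.exp ((M:ℝ) * (-(1/2:ℝ)^ℓ)) := by rw [← Real.exp_nat_mul]
    _ = Real.exp (-(j:ℝ)) := by rw [← hMp]; ring_nf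
  have hexppos : 0 < Real.exp (-(j:ℝ)) := Real.exp_pos _
  have hqMpos : 0 < q^M := pow_pos hq0 M
  have hj1 : (1:ℝ) ≤ (j:ℝ) := by exact_mod_cast hj
  -- split the power in the second term
  have hsplit2 : (1/2:ℝ)^(ℓ + (M-1)) = (1/2:ℝ)^ℓ * (1/2:ℝ)^(M-1) := pow_add _ _ _
  have hqsucc : q^(M-1) * q = q^M := by
    rw [← pow_succ]
    congr 1
    omega
  -- case split on ℓ
  rcases lt_or_ge ℓ 3 with hl3 | hl3
  · interval_cases ℓ
    · -- ℓ = 1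
      have hq : q = 1/2 := by rw [hqdef]; norm_num
      have hb1 : ∀ n, (aN 1 n : ℝ) * (1/2:ℝ)^n ≤ q^n := by
        intro n
        have h := aN_one n
        have : (aN 1 n : ℝ) ≤ 1 := by exact_mod_cast h
        rw [hq]
        nlinarith [pow_pos (show (0:ℝ) < 1/2 by norm_num) n]
      have hn1 : M + 1 - 2 = M - 1 := by omega
      rw [hn1]
      have hT1 : (aN 1 (M-1) : ℝ) * (1/2:ℝ)^(M-1) ≤ q^(M-1) := hb1 (M-1)
      have hT2 : (M:ℝ) * ((aN 1 (M-1) : ℝ) * (1/2:ℝ)^(1 + (M-1))) ≤ (j:ℝ) * q^(M-1) := by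
        rw [hsplit2]
        have e1 : (M:ℝ) * ((aN 1 (M-1):ℝ) * ((1/2:ℝ)^1 * (1/2:ℝ)^(M-1)))
            = ((M:ℝ) * (1/2:ℝ)^1) * ((aN 1 (M-1):ℝ) * (1/2:ℝ)^(M-1)) := by ring
        rw [e1, hMp]
        apply mul_le_mul_of_nonneg_left (hb1 (M-1)) (by positivity)
      have hq2 : q^(M-1) ≤ 2 * q^M := by
        nlinarith [pow_pos hq0 (M-1), hqsucc, hq]
      have hqMe : q^(M-1) ≤ 2 * Real.exp (-(j:ℝ)) := by linarith [hqM, hq2]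
      nlinarith [hT1, hT2, hqMe, hexppos, hj1,
        mul_le_mul_of_nonneg_left hqMe (le_trans zero_le_one hj1)]
    · -- ℓ = 2
      have hq : q = 3/4 := by rw [hqdef]; norm_num
      have hb2 : ∀ n, (aN 2 n : ℝ) * (1/2:ℝ)^n ≤ 2 * q^n := by
        intro n
        have h : (aN 2 n : ℝ) ≤ (n:ℝ) + 1 := by exact_mod_cast aN_two n
        have h2 := nat_succ_le n
        have h3 : (aN 2 n : ℝ) * (1/2:ℝ)^n ≤ (2 * (3/2:ℝ)^n) * (1/2:ℝ)^n := by
          apply mul_le_mul_of_nonneg_right (le_trans h h2) (by positivity)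
        calc (aN 2 n : ℝ) * (1/2:ℝ)^n ≤ (2 * (3/2:ℝ)^n) * (1/2:ℝ)^n := h3
        _ = 2 * ((3/2:ℝ) * (1/2:ℝ))^n := by rw [mul_pow]; ring
        _ = 2 * q^n := by rw [hq]; norm_num
      have hn1 : M + 2 - 2 = M := by omega
      rw [hn1]
      have hT1 : (aN 2 M : ℝ) * (1/2:ℝ)^M ≤ 2 * q^M := hb2 M
      have hT2 : (M:ℝ) * ((aN 2 (M-1) : ℝ) * (1/2:ℝ)^(2 + (M-1))) ≤ (j:ℝ) * (2 * q^(M-1)) := by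
        rw [hsplit2]
        have e1 : (M:ℝ) * ((aN 2 (M-1):ℝ) * ((1/2:ℝ)^2 * (1/2:ℝ)^(M-1)))
            = ((M:ℝ) * (1/2:ℝ)^2) * ((aN 2 (M-1):ℝ) * (1/2:ℝ)^(M-1)) := by ring
        rw [e1, hMp]
        apply mul_le_mul_of_nonneg_left (hb2 (M-1)) (by positivity)
      have hq2 : q^(M-1) ≤ (4/3) * q^M := by
        nlinarith [pow_pos hq0 (M-1), hqsucc, hq]
      have c1 : (aN 2 M : ℝ) * (1/2:ℝ)^M ≤ 2 * Real.exp (-(j:ℝ)) := by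
        calc (aN 2 M : ℝ) * (1/2:ℝ)^M ≤ 2 * q^M := hT1
        _ ≤ 2 * Real.exp (-(j:ℝ)) := by linarith
      have c2 : (j:ℝ) * (2 * q^(M-1)) ≤ (j:ℝ) * ((8/3) * Real.exp (-(j:ℝ))) := by
        apply mul_le_mul_of_nonneg_left _ (by positivity)
        calc 2 * q^(M-1) ≤ 2 * ((4/3) * q^M) := by linarith
        _ = (8/3) * q^M := by ring
        _ ≤ (8/3) * Real.exp (-(j:ℝ)) := by linarith
      have c3 : Real.exp (-(j:ℝ)) ≤ (j:ℝ) * Real.exp (-(j:ℝ)) := by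
        nlinarith [hexppos, hj1]
      nlinarith [hT1, hT2, c1, c2, c3]
  · -- ℓ ≥ 3
    have hps : (1/2:ℝ)^ℓ ≤ 1/8 := by
      calc (1/2:ℝ)^ℓ ≤ (1/2:ℝ)^3 := pow_le_pow_of_le_one (by norm_num) (by norm_num) hl3
      _ = 1/8 := by norm_num
    have hq78 : (7:ℝ)/8 ≤ q := by rw [hqdef]; linarith
    have hl2R : (0:ℝ) < (ℓ:ℝ) - 2 := by
      have : (3:ℝ) ≤ (ℓ:ℝ) := by exact_mod_cast hl3
      linarith
    have hqk_pos : (0:ℝ) < q^(ℓ-1) := pow_pos hq0 _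
    have hb : ∀ n, (aN ℓ n : ℝ) * (1/2:ℝ)^n ≤ 2 * q^n / q^(ℓ-1) := by
      intro n
      have h := aN_big ℓ hl3 n
      rw [← hqdef] at h
      have ht0 : 0 < 1/((ℓ:ℝ)-2) := by positivity
      have h2 : (aN ℓ n:ℝ) ≤ 2*(2*q)^n/q^(ℓ-1) := by linarith
      have h3 : (aN ℓ n : ℝ) * (1/2:ℝ)^n ≤ (2*(2*q)^n/q^(ℓ-1)) * (1/2:ℝ)^n :=
        mul_le_mul_of_nonneg_right h2 (by positivity)
      have h12 : (2:ℝ)^n * (1/2:ℝ)^n = 1 := by rw [← mul_pow]; norm_num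
      calc (aN ℓ n : ℝ) * (1/2:ℝ)^n ≤ (2*(2*q)^n/q^(ℓ-1)) * (1/2:ℝ)^n := h3
      _ = 2 * q^n / q^(ℓ-1) * ((2:ℝ)^n * (1/2:ℝ)^n) := by rw [mul_pow]; ring
      _ = 2 * q^n / q^(ℓ-1) := by rw [h12, mul_one]
    have hqsucc2 : q^(ℓ-1) * q = q^ℓ := by
      rw [← pow_succ]
      congr 1
      omega
    -- q^ℓ ≥ 5/8
    have hcast : (8:ℝ) * ℓ ≤ 3 * 2^ℓ := by exact_mod_cast two_exp ℓ hl3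
    have hlp : (ℓ:ℝ) * (1/2:ℝ)^ℓ ≤ 3/8 := by nlinarith [hppos, hp2]
    have hql : (5:ℝ)/8 ≤ q^ℓ := by
      have hber := one_add_mul_le_pow (a := -(1/2:ℝ)^ℓ) (by linarith) ℓ
      have : (1 + -(1/2:ℝ)^ℓ) = q := by rw [hqdef]; ring
      rw [this] at hber
      nlinarith [hber]
    -- T1 bound
    have hpow1 : q^(M + ℓ - 2) = q^(M-1) * q^(ℓ-1) := by
      rw [← pow_add]
      congr 1
      omega
    have hT1 : (aN ℓ (M + ℓ - 2) : ℝ) * (1/2:ℝ)^(M + ℓ - 2) ≤ 2 * q^(M-1) := by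
      calc (aN ℓ (M + ℓ - 2) : ℝ) * (1/2:ℝ)^(M + ℓ - 2)
          ≤ 2 * q^(M + ℓ - 2) / q^(ℓ-1) := hb (M + ℓ - 2)
      _ = 2 * q^(M-1) := by rw [hpow1]; field_simp
    have hq2 : q^(M-1) ≤ (8/7) * q^M := by
      nlinarith [hqsucc, hq78, pow_nonneg hq0.le (M-1)]
    have hc1 : (aN ℓ (M + ℓ - 2) : ℝ) * (1/2:ℝ)^(M + ℓ - 2) ≤ (16/7) * Real.exp (-(j:ℝ)) := by
      calc (aN ℓ (M + ℓ - 2) : ℝ) * (1/2:ℝ)^(M + ℓ - 2) ≤ 2 * q^(M-1) := hT1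
      _ ≤ 2 * ((8/7) * q^M) := by linarith
      _ = (16/7) * q^M := by ring
      _ ≤ (16/7) * Real.exp (-(j:ℝ)) := by linarith
    -- T2 bound
    have hdivb : 2 * q^(M-1) / q^(ℓ-1) ≤ (16/5) * q^M := by
      rw [div_le_iff₀ hqk_pos]
      calc 2 * q^(M-1) = (16/5) * q^(M-1) * (5/8) := by ring
      _ ≤ (16/5) * q^(M-1) * q^ℓ := by
          apply mul_le_mul_of_nonneg_left hql (by positivity)
      _ = (16/5) * q^M * q^(ℓ-1) := by rw [← hqsucc, ← hqsucc2]; ring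
    have hT2 : (M:ℝ) * ((aN ℓ (M-1) : ℝ) * (1/2:ℝ)^(ℓ + (M-1)))
        ≤ (j:ℝ) * ((16/5) * Real.exp (-(j:ℝ))) := by
      rw [hsplit2]
      have e1 : (M:ℝ) * ((aN ℓ (M-1):ℝ) * ((1/2:ℝ)^ℓ * (1/2:ℝ)^(M-1)))
          = ((M:ℝ) * (1/2:ℝ)^ℓ) * ((aN ℓ (M-1):ℝ) * (1/2:ℝ)^(M-1)) := by ring
      rw [e1, hMp]
      apply mul_le_mul_of_nonneg_left _ (by positivity)
      calc (aN ℓ (M-1):ℝ) * (1/2:ℝ)^(M-1) ≤ 2 * q^(M-1) / q^(ℓ-1) := hb (M-1)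
      _ ≤ (16/5) * q^M := hdivb
      _ ≤ (16/5) * Real.exp (-(j:ℝ)) := by linarith
    have c3 : Real.exp (-(j:ℝ)) ≤ (j:ℝ) * Real.exp (-(j:ℝ)) := by
      nlinarith [hexppos, hj1]
    nlinarith [hc1, hT2, c3]

lemma final_real' (ℓ j M : ℕ) (hℓ : 1 ≤ ℓ) (hj : 1 ≤ j) (hM : M = j * 2^ℓ) :
    (aN ℓ (M + ℓ - 2) : ℝ) * (1/2:ℝ)^(M + ℓ - 2)
      + (M : ℝ) * ((aN ℓ (M - 1) : ℝ) * (1/2:ℝ)^(ℓ + (M - 1)))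
      ≤ 6 * j * Real.exp (-(j:ℝ)) := by
  subst hM
  have h := final_real ℓ j hℓ hj
  convert h using 4 <;> push_cast <;> ring

end Stmt4Aux

open Stmt4Aux in
/-- Tail bound for the diameter of the block containing the origin:
`Q(diam(B^k(0)) ≥ j·β_k) ≤ 6 j e^{-j}` where `β_k = 2^{ℓ}`.  The block containing
the origin is the interval `[b, b'-1]` between two successive occurrence right
endpoints `b ≤ 0 < b'` of the word `I_ℓ`. -/
theorem stmt4 {Ω : Type} [MeasurableSpace Ω]
    (μ : Measure Ω) [IsProbabilityMeasure μ]
    (ℓ : ℕ) (hℓ : 1 ≤ ℓ)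
    (env : ℤ → Ω → Bool) (hmeas_env : ∀ i, Measurable (env i))
    (hiid_env : ∀ (s : Finset ℤ) (b : ℤ → Bool),
      μ {ω | ∀ i ∈ s, env i ω = b i} = (1 / 2 : ENNReal) ^ s.card)
    (j : ℕ) (hj : 1 ≤ j) :
    μ {ω | ∃ b b' : ℤ, occEnd ℓ (fun t => env t ω) b ∧ occEnd ℓ (fun t => env t ω) b' ∧
        b ≤ 0 ∧ 0 < b' ∧ (∀ c, b < c → c < b' → ¬ occEnd ℓ (fun t => env t ω) c) ∧
        (j * 2 ^ ℓ : ℤ) ≤ b' - b}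
      ≤ ENNReal.ofReal (6 * j * Real.exp (-(j : ℝ))) := by
  classical
  obtain ⟨M, hMdef⟩ : ∃ M : ℕ, M = j * 2 ^ ℓ := ⟨_, rfl⟩
  have h2l : (2:ℕ) ≤ 2^ℓ := by
    calc (2:ℕ) = 2^1 := by norm_num
    _ ≤ 2^ℓ := Nat.pow_le_pow_right (by norm_num) hℓ
  have hM2 : 2 ≤ M := by
    rw [hMdef]
    calc 2 ≤ 2^ℓ := h2l
    _ = 1 * 2^ℓ := by ring
    _ ≤ j * 2^ℓ := Nat.mul_le_mul_right _ hj
  set Bev : Set Ω := {ω | ∀ c : ℤ, -(M:ℤ)+2 ≤ c → c ≤ 0 →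
      ¬ occEnd ℓ (fun t => env t ω) c} with hBevdef
  set Aev : ℤ → Set Ω := fun b => {ω | occEnd ℓ (fun t => env t ω) b ∧
      ∀ c : ℤ, b < c → c ≤ b + (M:ℤ) - 1 → ¬ occEnd ℓ (fun t => env t ω) c} with hAevdef
  have hcover : {ω | ∃ b b' : ℤ, occEnd ℓ (fun t => env t ω) b ∧
        occEnd ℓ (fun t => env t ω) b' ∧
        b ≤ 0 ∧ 0 < b' ∧ (∀ c, b < c → c < b' → ¬ occEnd ℓ (fun t => env t ω) c) ∧
        (j * 2 ^ ℓ : ℤ) ≤ b' - b}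
      ⊆ Bev ∪ ⋃ b ∈ Finset.Icc (-(M:ℤ)+1) 0, Aev b := by
    rintro ω ⟨b, b', hob, hob', hb0, hb'0, hbet, hdiam⟩
    have hdM : (M:ℤ) ≤ b' - b := by
      rw [hMdef]; push_cast; exact hdiam
    by_cases hcase : -(M:ℤ)+1 ≤ b
    · refine Set.mem_union_right _
        (Set.mem_biUnion (Finset.mem_Icc.2 ⟨hcase, hb0⟩) ⟨hob, ?_⟩)
      intro c hc1 hc2
      exact hbet c hc1 (by omega)
    · refine Set.mem_union_left _ ?_
      intro c hc1 hc2
      exact hbet c (by omega) (by omega)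
  have hμB : μ Bev ≤ (aN ℓ (M + ℓ - 2) : ENNReal) * (1/2:ENNReal)^(M + ℓ - 2) := by
    apply cylinder_bound μ env hiid_env (3 - (M:ℤ) - ℓ) (M + ℓ - 2) (AvSet ℓ (M + ℓ - 2)) Bev
    intro ω hω
    refine ⟨fun d => env (3 - (M:ℤ) - ℓ + d) ω, ?_, fun d => rfl⟩
    rw [mem_AvSet]
    intro o ho hocc
    refine hω (3 - (M:ℤ) - ℓ + o + ℓ - 1) (by omega) (by omega) ?_
    intro i hi
    have h1 := hocc i hi
    have hoin : o + i < M + ℓ - 2 := by omega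
    rw [extF, dif_pos hoin] at h1
    show env ((3 - (M:ℤ) - ℓ + o + ℓ - 1) - ℓ + 1 + i) ω = decide (i < ℓ - 1)
    rw [show (3 - (M:ℤ) - ℓ + o + ℓ - 1) - ℓ + 1 + i = 3 - (M:ℤ) - ℓ + ((o+i:ℕ):ℤ) by
      push_cast; ring]
    exact h1
  have hμA : ∀ b : ℤ, μ (Aev b) ≤ (aN ℓ (M-1) : ENNReal) * (1/2:ENNReal)^(ℓ+(M-1)) := by
    intro b
    have hcb := cylinder_bound μ env hiid_env (b - ℓ + 1) (ℓ + (M-1))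
      ((AvSet ℓ (M-1)).image (prep ℓ (M-1))) (Aev b) ?_
    · refine hcb.trans ?_
      apply mul_le_mul_left
      exact_mod_cast Nat.cast_le.2 (Finset.card_image_le (s := AvSet ℓ (M-1)) (f := prep ℓ (M-1)))
    · intro ω hω
      obtain ⟨hb, hno⟩ := hω
      refine ⟨fun d => env (b - ℓ + 1 + d) ω, ?_, fun d => rfl⟩
      refine Finset.mem_image.2 ⟨fun y => env (b + 1 + y) ω, ?_, ?_⟩
      · rw [mem_AvSet]
        intro o ho hocc
        refine hno (b + 1 + o + ℓ - 1) (by omega) (by omega) ?_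
        intro i hi
        have h1 := hocc i hi
        have hoin : o + i < M - 1 := by omega
        rw [extF, dif_pos hoin] at h1
        show env ((b + 1 + o + ℓ - 1) - ℓ + 1 + i) ω = decide (i < ℓ - 1)
        rw [show (b + 1 + (o:ℤ) + ℓ - 1) - ℓ + 1 + i = b + 1 + ((o+i:ℕ):ℤ) by
          push_cast; ring]
        exact h1
      · funext x
        simp only [prep]
        split_ifs with hx
        · have h2 := hb x.1 hx
          exact h2.symm
        · show env (b + 1 + ((x.1 - ℓ:ℕ):ℤ)) ω = env (b - (ℓ:ℤ) + 1 + x.1) ω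
          congr 1
          omega
  have hIcc : (Finset.Icc (-(M:ℤ)+1) 0).card = M := by
    rw [Int.card_Icc]
    omega
  have half : (1/2 : ENNReal) = ENNReal.ofReal (1/2:ℝ) := by
    rw [ENNReal.ofReal_div_of_pos (by norm_num), ENNReal.ofReal_one, ENNReal.ofReal_ofNat]
  have conv : ∀ (c n : ℕ), (c : ENNReal) * (1/2:ENNReal)^n
      = ENNReal.ofReal ((c:ℝ) * (1/2:ℝ)^n) := by
    intro c n
    rw [half, ← ENNReal.ofReal_pow (by norm_num), ← ENNReal.ofReal_natCast c,
      ← ENNReal.ofReal_mul (by positivity)]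
  have conv2 : (M : ENNReal) * ((aN ℓ (M-1) : ENNReal) * (1/2:ENNReal)^(ℓ+(M-1)))
      = ENNReal.ofReal ((M:ℝ) * ((aN ℓ (M-1):ℝ) * (1/2:ℝ)^(ℓ+(M-1)))) := by
    rw [conv, ← ENNReal.ofReal_natCast M, ← ENNReal.ofReal_mul (by positivity)]
  calc μ {ω | ∃ b b' : ℤ, occEnd ℓ (fun t => env t ω) b ∧
        occEnd ℓ (fun t => env t ω) b' ∧
        b ≤ 0 ∧ 0 < b' ∧ (∀ c, b < c → c < b' → ¬ occEnd ℓ (fun t => env t ω) c) ∧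
        (j * 2 ^ ℓ : ℤ) ≤ b' - b}
      ≤ μ (Bev ∪ ⋃ b ∈ Finset.Icc (-(M:ℤ)+1) 0, Aev b) := measure_mono hcover
    _ ≤ μ Bev + μ (⋃ b ∈ Finset.Icc (-(M:ℤ)+1) 0, Aev b) := measure_union_le _ _
    _ ≤ μ Bev + ∑ b ∈ Finset.Icc (-(M:ℤ)+1) 0, μ (Aev b) := by
        gcongr
        exact measure_biUnion_finset_le _ _
    _ ≤ (aN ℓ (M + ℓ - 2) : ENNReal) * (1/2:ENNReal)^(M + ℓ - 2)
        + ∑ _b ∈ Finset.Icc (-(M:ℤ)+1) 0,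
            ((aN ℓ (M-1) : ENNReal) * (1/2:ENNReal)^(ℓ+(M-1))) := by
        gcongr with b hb
        exact hμA b
    _ = (aN ℓ (M + ℓ - 2) : ENNReal) * (1/2:ENNReal)^(M + ℓ - 2)
        + (M : ENNReal) * ((aN ℓ (M-1) : ENNReal) * (1/2:ENNReal)^(ℓ+(M-1))) := by
        rw [Finset.sum_const, hIcc, nsmul_eq_mul]
    _ = ENNReal.ofReal ((aN ℓ (M + ℓ - 2) : ℝ) * (1/2:ℝ)^(M + ℓ - 2)
        + (M:ℝ) * ((aN ℓ (M-1):ℝ) * (1/2:ℝ)^(ℓ+(M-1)))) := by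
        rw [conv, conv2, ENNReal.ofReal_add (by positivity) (by positivity)]
    _ ≤ ENNReal.ofReal (6 * j * Real.exp (-(j : ℝ))) :=
        ENNReal.ofReal_le_ofReal (final_real' ℓ j M hℓ hj hMdef)
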